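/- Let X be a topological vector space, T : X → X a continuous linear operator, X₀ = {x₁, x₂, ...} a sequentially dense countable subset, Sₙ : X₀ → X maps, Y ⊆ X a subspace with a finer F-space topology τ, and (n_k) an increasing sequence of naturals (n₀ = 0) such that: (i)' for each x ∈ X₀ and each j ∈ ℕ, the sequence (T^{n_k} S_{n_j} x)_k is eventually contained in Y and converges to 0 in (Y, τ); (ii)' for each x ∈ X₀ and each j ≥ 0, the sequence (T^{n_j} S_{n_k} x)_k is eventually contained in Y and converges to 0 in (Y, τ); (iii)' for each x ∈ X₀, the sequence (x − T^{n_k} S_{n_k} x)_k is eventually contained in Y and converges to 0 in (Y, τ). Then T is sequentially hypercyclic. -/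

import Mathlib

open Filter Topology

/-- Recursion helper: build a strictly monotone sequence satisfying a
prefix-dependent predicate, one value at a time. -/
lemma exists_seq_strictMono' {Q : (ℕ → ℕ) → ℕ → Prop}
    (hQ : ∀ f g : ℕ → ℕ, ∀ l, (∀ i, i ≤ l → f i = g i) → Q f l → Q g l)
    (h : ∀ f : ℕ → ℕ, ∀ l, ∃ c, (∀ i, i < l → f i < c) ∧
      Q (fun i => if i = l then c else f i) l) :
    ∃ k : ℕ → ℕ, StrictMono k ∧ ∀ l, Q k l := by
  classical
  let K : ℕ → ℕ → ℕ := fun l => Nat.rec (fun _ => 0)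
    (fun l prev => fun i => if i = l then (h prev l).choose else prev i) l
  have hK : ∀ l, K (l + 1) = fun i => if i = l then (h (K l) l).choose else K l i :=
    fun l => rfl
  set k : ℕ → ℕ := fun l => K (l + 1) l with hk
  have hkc : ∀ l, k l = (h (K l) l).choose := by
    intro l; simp [hk, hK l]
  have hstab : ∀ l m, l < m → K m l = k l := by
    intro l m hlm
    induction m with
    | zero => omega
    | succ m ih =>
      rcases Nat.lt_or_ge l m with h' | h'
      · have h2 : K (m + 1) l = K m l := by
          rw [hK m]; simp [Nat.ne_of_lt h']
        rw [h2, ih h']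
      · have : l = m := by omega
        subst this; rfl
  refine ⟨k, ?_, ?_⟩
  · apply strictMono_nat_of_lt_succ
    intro l
    have h1 := (h (K (l + 1)) (l + 1)).choose_spec.1 l (Nat.lt_succ_self l)
    have h2 : k (l + 1) = (h (K (l + 1)) (l + 1)).choose := hkc (l + 1)
    have h3 : K (l + 1) l = k l := rfl
    omega
  · intro l
    have hs := (h (K l) l).choose_spec.2
    refine hQ _ _ l ?_ hs
    intro i hi
    rcases eq_or_lt_of_le hi with rfl | hi'
    · simp [hkc i]
    · simp [Nat.ne_of_lt hi', hstab i l hi']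

/-- Sum of elements of a decreasing "additive" filtration lies deep in the
filtration: if `g i ∈ W (i+1)` for `i ∈ s` and all elements of `s` are `≥ N`,
then the sum lies in `W N`. -/
lemma sum_mem_filtration {Y : Type*} [AddCommMonoid Y] (W : ℕ → Set Y)
    (h0 : ∀ a, (0 : Y) ∈ W a)
    (hadd : ∀ a, ∀ y ∈ W (a + 1), ∀ z ∈ W (a + 1), y + z ∈ W a)
    (hmono : ∀ a b, a ≤ b → W b ⊆ W a) :
    ∀ (s : Finset ℕ) (g : ℕ → Y) (N : ℕ), (∀ i ∈ s, g i ∈ W (i + 1)) →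
      (∀ i ∈ s, N ≤ i) → ∑ i ∈ s, g i ∈ W N := by
  intro s
  induction s using Finset.induction_on_min with
  | empty => intro g N _ _; simpa using h0 N
  | insert a s ha ih =>
    intro g N hg hN
    have hic : a ∉ s := fun h => absurd (ha a h) (lt_irrefl a)
    rw [Finset.sum_insert hic]
    have haN : N ≤ a := hN a (Finset.mem_insert_self a s)
    have h1 : g a ∈ W (N + 1) :=
      hmono _ _ (by omega) (hg a (Finset.mem_insert_self a s))
    have h2 : ∑ i ∈ s, g i ∈ W (N + 1) := by
      refine hmono (N + 1) (a + 1) (by omega) ?_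
      exact ih g (a + 1) (fun i hi => hg i (Finset.mem_insert_of_mem hi))
        (fun i hi => ha i hi)
    exact hadd N _ h1 _ h2

/-- Corollary 1 (hypercyclicity criterion with conditions (i)', (ii)', (iii)'):
`T` is sequentially hypercyclic provided there are a sequentially dense
sequence `(xₙ)` (indexed by `n ≥ 1`), maps `Sₙ`, a subspace `Y ⊆ X` with a
finer F-space topology (modelled by a complete metrizable topological vector
space `Y` together with a continuous injective linear embedding `ι : Y → X`),
and an increasing sequence `(n_k)` with `n₀ = 0` such that for each `x ∈ X₀`
the sequences `(T^{n_k} S_{n_j} x)_k`, `(T^{n_j} S_{n_k} x)_k` and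
`(x − T^{n_k} S_{n_k} x)_k` are eventually contained in `Y` and converge to `0`
in `Y`. -/
theorem stmt_1 {X : Type*} [AddCommGroup X] [Module ℝ X] [TopologicalSpace X]
    [IsTopologicalAddGroup X] [ContinuousSMul ℝ X] (T : X →L[ℝ] X)
    (x : ℕ → X)
    (hdense : ∀ z : X, ∃ σ : ℕ → ℕ, (∀ k, 1 ≤ σ k) ∧
      Tendsto (fun k => x (σ k)) atTop (𝓝 z))
    (S : ℕ → X → X)
    {Y : Type*} [AddCommGroup Y] [Module ℝ Y] [UniformSpace Y]
    [IsUniformAddGroup Y] [ContinuousSMul ℝ Y] [CompleteSpace Y]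
    [TopologicalSpace.PseudoMetrizableSpace Y]
    (ι : Y →ₗ[ℝ] X) (hι : Continuous ι) (hι_inj : Function.Injective ι)
    (n : ℕ → ℕ) (hn : StrictMono n) (hn0 : n 0 = 0)
    (hi : ∀ m : ℕ, 1 ≤ m → ∀ j : ℕ, 1 ≤ j → ∃ y : ℕ → Y,
      (∀ᶠ k in atTop, ι (y k) = (T ^ n k) (S (n j) (x m))) ∧
      Tendsto y atTop (𝓝 0))
    (hii : ∀ m : ℕ, 1 ≤ m → ∀ j : ℕ, ∃ y : ℕ → Y,
      (∀ᶠ k in atTop, ι (y k) = (T ^ n j) (S (n k) (x m))) ∧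
      Tendsto y atTop (𝓝 0))
    (hiii : ∀ m : ℕ, 1 ≤ m → ∃ y : ℕ → Y,
      (∀ᶠ k in atTop, ι (y k) = x m - (T ^ n k) (S (n k) (x m))) ∧
      Tendsto y atTop (𝓝 0)) :
    ∃ hv : X, ∀ z : X, ∃ m : ℕ → ℕ, StrictMono m ∧
      Tendsto (fun k => (T ^ m k) hv) atTop (𝓝 z) := by
  classical
  -- a symmetric antitone basis of neighborhoods of 0 in Y with W(a+1)+W(a+1) ⊆ W a
  obtain ⟨V, hVb, hVadd⟩ := IsTopologicalAddGroup.exists_antitone_basis_nhds_zero Y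
  set W : ℕ → Set Y := fun a => V a ∩ (fun y : Y => -y) ⁻¹' V a with hWdef
  have hVmem : ∀ a, V a ∈ 𝓝 (0 : Y) := fun a => hVb.mem a
  have hWnhds : ∀ a, W a ∈ 𝓝 (0 : Y) := by
    intro a
    refine Filter.inter_mem (hVmem a) ?_
    have hneg : Tendsto (fun y : Y => -y) (𝓝 0) (𝓝 (0 : Y)) := by
      simpa using (continuous_neg (G := Y)).tendsto (0 : Y)
    exact hneg (hVmem a)
  have hW0 : ∀ a, (0 : Y) ∈ W a := fun a => mem_of_mem_nhds (hWnhds a)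
  have hWsymm : ∀ a, ∀ y ∈ W a, -y ∈ W a := by
    rintro a y ⟨h1, h2⟩
    exact ⟨h2, by simpa using h1⟩
  have hWadd : ∀ a, ∀ y ∈ W (a + 1), ∀ z ∈ W (a + 1), y + z ∈ W a := by
    rintro a y ⟨hy1, hy2⟩ z ⟨hz1, hz2⟩
    refine ⟨hVadd a (Set.add_mem_add hy1 hz1), ?_⟩
    have hnegsum : -(y + z) = -y + -z := by abel
    simp only [Set.mem_preimage, hnegsum]
    exact hVadd a (Set.add_mem_add hy2 hz2)
  have hWmono : ∀ a b, a ≤ b → W b ⊆ W a := by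
    intro a b hab
    exact Set.inter_subset_inter (hVb.antitone hab) (Set.preimage_mono (hVb.antitone hab))
  have hWbasis : ∀ U ∈ 𝓝 (0 : Y), ∃ a, W a ⊆ U := by
    intro U hU
    obtain ⟨a, -, ha⟩ := hVb.toHasBasis.mem_iff.mp hU
    exact ⟨a, Set.inter_subset_left.trans ha⟩
  -- closure of W (a+1) is inside W a
  have hWclosure : ∀ a, closure (W (a + 1)) ⊆ W a := by
    intro a y hy
    have ht : (y + ·) '' W (a + 1) ∈ 𝓝 y := by
      rw [← map_add_left_nhds_zero y]
      exact Filter.image_mem_map (hWnhds (a + 1))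
    obtain ⟨z, hz1, hz2⟩ := mem_closure_iff_nhds.mp hy _ ht
    obtain ⟨s, hs, rfl⟩ := hz1
    have hyy : y = (y + s) + (-s) := by abel
    rw [hyy]
    exact hWadd a _ hz2 _ (hWsymm _ _ hs)
  -- Cauchy criterion
  have cauchy_of : ∀ f : ℕ → Y, (∀ a N M, a ≤ N → N ≤ M → f M - f N ∈ W a) →
      ∃ y0, Tendsto f atTop (𝓝 y0) := by
    intro f hf
    apply cauchySeq_tendsto_of_complete
    rw [cauchySeq_iff]
    intro Vu hVu
    rw [uniformity_eq_comap_nhds_zero Y] at hVu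
    obtain ⟨U, hU, hUV⟩ := hVu
    obtain ⟨a, haU⟩ := hWbasis U hU
    refine ⟨a, fun p hp q hq => ?_⟩
    apply hUV
    simp only [Set.mem_preimage]
    rcases le_total p q with h | h
    · exact haU (hf a p q hp h)
    · have hsym := hWsymm a _ (hf a q p hq h)
      simpa using haU hsym
  -- every element of closure {0} in X belongs to every neighborhood of 0
  have hspec : ∀ δ : X, δ ∈ closure ({0} : Set X) → ∀ U ∈ 𝓝 (0 : X), δ ∈ U := by
    intro δ hδ U hU
    have hUneg : (fun y : X => -y) ⁻¹' U ∈ 𝓝 (0 : X) := by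
      have hneg : Tendsto (fun y : X => -y) (𝓝 0) (𝓝 (0 : X)) := by
        simpa using (continuous_neg (G := X)).tendsto (0 : X)
      exact hneg hU
    have ht : (δ + ·) '' ((fun y : X => -y) ⁻¹' U) ∈ 𝓝 δ := by
      rw [← map_add_left_nhds_zero δ]
      exact Filter.image_mem_map hUneg
    obtain ⟨z, hz1, hz2⟩ := mem_closure_iff_nhds.mp hδ _ ht
    obtain ⟨s, hs, rfl⟩ := hz1
    simp only [Set.mem_singleton_iff] at hz2
    have hδs : δ = -s := eq_neg_of_add_eq_zero_left hz2
    rw [hδs]; exact hs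
  -- the enumeration of targets
  set e : ℕ → ℕ := fun l => (Nat.unpair l).1 + 1 with he
  have he1 : ∀ l, 1 ≤ e l := fun l => Nat.le_add_left _ _
  -- the predicate used for the recursive choice of the indices k
  set Q : (ℕ → ℕ) → ℕ → Prop := fun f l =>
    1 ≤ f l ∧
    (∃ u : Y, ι u = S (n (f l)) (x (e l)) ∧ u ∈ W (l + 1)) ∧
    (∃ v : Y, ι v = x (e l) - (T ^ n (f l)) (S (n (f l)) (x (e l))) ∧ v ∈ W (l + 3)) ∧
    (∀ i, i < l → 1 ≤ f i →
      ∃ w : Y, ι w = (T ^ n (f l)) (S (n (f i)) (x (e i))) ∧ w ∈ W (l + i + 4)) ∧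
    (∀ i, i < l →
      ∃ w : Y, ι w = (T ^ n (f i)) (S (n (f l)) (x (e l))) ∧ w ∈ W (l + i + 4)) with hQdef
  have hQpre : ∀ f g : ℕ → ℕ, ∀ l, (∀ i, i ≤ l → f i = g i) → Q f l → Q g l := by
    intro f g l hfg hQf
    rw [hQdef] at hQf ⊢
    obtain ⟨h1, h2, h3, h4, h5⟩ := hQf
    have hl : f l = g l := hfg l le_rfl
    refine ⟨hl ▸ h1, hl ▸ h2, hl ▸ h3, ?_, ?_⟩
    · intro i hil hgi
      have hfi : f i = g i := hfg i hil.le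
      have h := h4 i hil (hfi ▸ hgi)
      rw [hfi, hl] at h
      exact h
    · intro i hil
      have hfi : f i = g i := hfg i hil.le
      have h := h5 i hil
      rw [hfi, hl] at h
      exact h
  have hstep : ∀ f : ℕ → ℕ, ∀ l, ∃ c, (∀ i, i < l → f i < c) ∧
      Q (fun i => if i = l then c else f i) l := by
    intro f l
    have hA : ∀ᶠ c in atTop, ∃ u : Y, ι u = S (n c) (x (e l)) ∧ u ∈ W (l + 1) := by
      obtain ⟨y, hy1, hy2⟩ := hii (e l) (he1 l) 0
      filter_upwards [hy1, hy2.eventually_mem (hWnhds (l + 1))] with c h1 h2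
      refine ⟨y c, ?_, h2⟩
      rw [h1, hn0, pow_zero, ContinuousLinearMap.one_apply]
    have hB : ∀ᶠ c in atTop, ∃ v : Y,
        ι v = x (e l) - (T ^ n c) (S (n c) (x (e l))) ∧ v ∈ W (l + 3) := by
      obtain ⟨y, hy1, hy2⟩ := hiii (e l) (he1 l)
      filter_upwards [hy1, hy2.eventually_mem (hWnhds (l + 3))] with c h1 h2
      exact ⟨y c, h1, h2⟩
    have hC : ∀ᶠ c in atTop, ∀ i ∈ Finset.range l, (1 ≤ f i →
        ∃ w : Y, ι w = (T ^ n c) (S (n (f i)) (x (e i))) ∧ w ∈ W (l + i + 4)) := by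
      rw [Filter.eventually_all_finset]
      intro i _
      by_cases hfi : 1 ≤ f i
      · obtain ⟨y, hy1, hy2⟩ := hi (e i) (he1 i) (f i) hfi
        filter_upwards [hy1, hy2.eventually_mem (hWnhds (l + i + 4))] with c h1 h2
        exact fun _ => ⟨y c, h1, h2⟩
      · exact Eventually.of_forall fun c h => absurd h hfi
    have hD : ∀ᶠ c in atTop, ∀ i ∈ Finset.range l,
        ∃ w : Y, ι w = (T ^ n (f i)) (S (n c) (x (e l))) ∧ w ∈ W (l + i + 4) := by
      rw [Filter.eventually_all_finset]
      intro i _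
      obtain ⟨y, hy1, hy2⟩ := hii (e l) (he1 l) (f i)
      filter_upwards [hy1, hy2.eventually_mem (hWnhds (l + i + 4))] with c h1 h2
      exact ⟨y c, h1, h2⟩
    have hE : ∀ᶠ c in atTop, ∀ i ∈ Finset.range l, f i < c := by
      rw [Filter.eventually_all_finset]
      intro i _
      exact eventually_gt_atTop (f i)
    obtain ⟨c, hc⟩ :=
      (((((hA.and hB).and hC).and hD).and hE).and (eventually_ge_atTop 1)).exists
    obtain ⟨⟨⟨⟨⟨hcA, hcB⟩, hcC⟩, hcD⟩, hcE⟩, hc1⟩ := hc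
    have hgl : (if l = l then c else f l) = c := if_pos rfl
    have hgi : ∀ i, i < l → (if i = l then c else f i) = f i :=
      fun i hil => if_neg (Nat.ne_of_lt hil)
    refine ⟨c, fun i hil => hcE i (Finset.mem_range.2 hil), ?_⟩
    rw [hQdef]
    beta_reduce
    refine ⟨?_, ?_, ?_, ?_, ?_⟩
    · simpa only [hgl, ite_true] using hc1
    · simpa only [hgl, ite_true] using hcA
    · simpa only [hgl, ite_true] using hcB
    · intro i hil hfi
      rw [hgi i hil] at hfi
      rw [hgl, hgi i hil]
      exact hcC i (Finset.mem_range.2 hil) hfi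
    · intro i hil
      rw [hgl, hgi i hil]
      exact hcD i (Finset.mem_range.2 hil)
  obtain ⟨k, hkmono, hkQ⟩ := exists_seq_strictMono' hQpre hstep
  have hkQ' : ∀ l,
      1 ≤ k l ∧
      (∃ u : Y, ι u = S (n (k l)) (x (e l)) ∧ u ∈ W (l + 1)) ∧
      (∃ v : Y, ι v = x (e l) - (T ^ n (k l)) (S (n (k l)) (x (e l))) ∧ v ∈ W (l + 3)) ∧
      (∀ i, i < l → 1 ≤ k i →
        ∃ w : Y, ι w = (T ^ n (k l)) (S (n (k i)) (x (e i))) ∧ w ∈ W (l + i + 4)) ∧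
      (∀ i, i < l →
        ∃ w : Y, ι w = (T ^ n (k i)) (S (n (k l)) (x (e l))) ∧ w ∈ W (l + i + 4)) := by
    intro l
    have h := hkQ l
    rw [hQdef] at h
    exact h
  have hk1 : ∀ l, 1 ≤ k l := fun l => (hkQ' l).1
  choose u huι hum using fun l => (hkQ' l).2.1
  choose v hvι hvm using fun l => (hkQ' l).2.2.1
  choose wC hwCι hwCm using fun l i (h : i < l) => (hkQ' l).2.2.2.1 i h (hk1 i)
  choose wD hwDι hwDm using fun l i (h : i < l) => (hkQ' l).2.2.2.2 i h
  set w : ℕ → ℕ → Y := fun l i =>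
    if h : i < l then wC l i h else if h' : l < i then wD i l h' else 0 with hwdef
  have hwι : ∀ l i, i ≠ l → ι (w l i) = (T ^ n (k l)) (S (n (k i)) (x (e i))) := by
    intro l i hne
    rcases hne.lt_or_gt with h | h
    · simp only [hwdef, dif_pos h]
      exact hwCι l i h
    · simp only [hwdef, dif_neg (not_lt.2 h.le), dif_pos h]
      exact hwDι i l h
  have hwm : ∀ l i, i ≠ l → w l i ∈ W (l + i + 4) := by
    intro l i hne
    rcases hne.lt_or_gt with h | h
    · simp only [hwdef, dif_pos h]
      exact hwCm l i h
    · simp only [hwdef, dif_neg (not_lt.2 h.le), dif_pos h]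
      have hm := hwDm i l h
      rw [show i + l + 4 = l + i + 4 by omega] at hm
      exact hm
  -- the series of the u's
  set P : ℕ → Y := fun N => ∑ i ∈ Finset.range N, u i with hPdef
  have hPdiff : ∀ a N M, a ≤ N → N ≤ M → P M - P N ∈ W a := by
    intro a N M haN hNM
    have hps : P M - P N = ∑ i ∈ Finset.Ico N M, u i :=
      (Finset.sum_Ico_eq_sub _ hNM).symm
    rw [hps]
    refine hWmono a N haN ?_
    refine sum_mem_filtration W hW0 hWadd hWmono _ _ _ (fun i _ => hum i) ?_
    intro i hi
    exact (Finset.mem_Ico.1 hi).1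
  obtain ⟨us, hus⟩ := cauchy_of P hPdiff
  -- the error series for each stage l
  set q : ℕ → ℕ → Y := fun l N => (∑ i ∈ (Finset.range N).erase l, w l i) - v l with hqdef
  have hqdiff : ∀ l a N M, a ≤ N → N ≤ M → q l M - q l N ∈ W a := by
    intro l a N M haN hNM
    have hsub : (Finset.range N).erase l ⊆ (Finset.range M).erase l :=
      Finset.erase_subset_erase _ (Finset.range_subset_range.2 hNM)
    have hqq : q l M - q l N
        = ∑ i ∈ (Finset.range M).erase l \ (Finset.range N).erase l, w l i := by
      rw [Finset.sum_sdiff_eq_sub hsub, hqdef]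
      exact sub_sub_sub_cancel_right _ _ _
    rw [hqq]
    refine hWmono a N haN (sum_mem_filtration W hW0 hWadd hWmono _ _ _ ?_ ?_)
    · intro i hi
      have hine : i ≠ l := Finset.ne_of_mem_erase (Finset.mem_sdiff.1 hi).1
      exact hWmono _ _ (by omega) (hwm l i hine)
    · intro i hi
      rcases Finset.mem_sdiff.1 hi with ⟨h1, h2⟩
      have hne := Finset.ne_of_mem_erase h1
      by_contra hN'
      push_neg at hN'
      exact h2 (Finset.mem_erase.2 ⟨hne, Finset.mem_range.2 (by omega)⟩)
  choose r hr using fun l => cauchy_of (q l) (hqdiff l)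
  have hqmem : ∀ l N, q l N ∈ W (l + 2) := by
    intro l N
    have hsum : (∑ i ∈ (Finset.range N).erase l, w l i) ∈ W (l + 3) := by
      have hkey := sum_mem_filtration (fun j => W (l + 3 + j)) (fun a => hW0 _)
        (fun a y hy z hz => hWadd (l + 3 + a) y hy z hz)
        (fun a b hab => hWmono _ _ (by omega)) ((Finset.range N).erase l) (w l) 0
        ?_ (fun i _ => Nat.zero_le i)
      · simpa using hkey
      · intro i hmem
        have hne := Finset.ne_of_mem_erase hmem
        have hm := hwm l i hne
        rw [show l + i + 4 = l + 3 + (i + 1) by omega] at hm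
        exact hm
    have hqs : q l N = (∑ i ∈ (Finset.range N).erase l, w l i) + (- v l) := by
      rw [hqdef]; abel
    rw [hqs]
    exact hWadd (l + 2) _ hsum _ (hWsymm _ _ (hvm l))
  have hrmem : ∀ l, r l ∈ W (l + 1) := fun l =>
    hWclosure (l + 1)
      (mem_closure_of_tendsto (hr l) (Eventually.of_forall fun N => hqmem l N))
  -- the key identity for partial sums
  have hid : ∀ l N, l < N → (T ^ n (k l)) (ι (P N)) = x (e l) + ι (q l N) := by
    intro l N hlN
    have h1 : ι (P N) = ∑ i ∈ Finset.range N, S (n (k i)) (x (e i)) := by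
      rw [hPdef]
      rw [map_sum]
      exact Finset.sum_congr rfl fun i _ => huι i
    rw [h1, map_sum]
    have hmem : l ∈ Finset.range N := Finset.mem_range.2 hlN
    rw [← Finset.add_sum_erase _ _ hmem]
    have h2 : ∑ i ∈ (Finset.range N).erase l, (T ^ n (k l)) (S (n (k i)) (x (e i)))
        = ι (∑ i ∈ (Finset.range N).erase l, w l i) := by
      rw [map_sum]
      exact Finset.sum_congr rfl fun i hi => (hwι l i (Finset.ne_of_mem_erase hi)).symm
    rw [h2]
    have h3 : (T ^ n (k l)) (S (n (k l)) (x (e l))) = x (e l) - ι (v l) := by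
      rw [hvι l]; abel
    rw [h3, hqdef, map_sub]
    abel
  -- the orbit identity, up to an element of the closure of {0}
  have horbit : ∀ l, ∃ δ : X, δ ∈ closure ({0} : Set X) ∧
      (T ^ n (k l)) (ι us) = x (e l) + ι (r l) + δ := by
    intro l
    refine ⟨(T ^ n (k l)) (ι us) - (x (e l) + ι (r l)), ?_, by abel⟩
    have hA : Tendsto (fun N => (T ^ n (k l)) (ι (P N))) atTop
        (𝓝 ((T ^ n (k l)) (ι us))) :=
      (((T ^ n (k l)).continuous.comp hι).tendsto us).comp hus
    have hB : Tendsto (fun N => x (e l) + ι (q l N)) atTop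
        (𝓝 (x (e l) + ι (r l))) :=
      tendsto_const_nhds.add ((hι.tendsto (r l)).comp (hr l))
    have hAB : Tendsto (fun N => (T ^ n (k l)) (ι (P N)) - (x (e l) + ι (q l N)))
        atTop (𝓝 ((T ^ n (k l)) (ι us) - (x (e l) + ι (r l)))) := hA.sub hB
    have hzero : ∀ᶠ N in atTop,
        (T ^ n (k l)) (ι (P N)) - (x (e l) + ι (q l N)) = (0 : X) := by
      filter_upwards [eventually_gt_atTop l] with N hN
      rw [hid l N hN]; abel
    have h0t : Tendsto (fun _ : ℕ => (0 : X)) atTop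
        (𝓝 ((T ^ n (k l)) (ι us) - (x (e l) + ι (r l)))) :=
      Filter.Tendsto.congr' hzero hAB
    exact mem_closure_of_tendsto h0t (Eventually.of_forall fun _ => rfl)
  choose δ hδc hδeq using horbit
  -- conclusion
  refine ⟨ι us, ?_⟩
  intro z
  obtain ⟨σ, hσ1, hσ2⟩ := hdense z
  set L : ℕ → ℕ := fun j => Nat.rec (Nat.pair (σ 0 - 1) 0)
    (fun j prev => Nat.pair (σ (j + 1) - 1) (prev + 1)) j with hLdef
  have hLsucc : ∀ j, L (j + 1) = Nat.pair (σ (j + 1) - 1) (L j + 1) := fun j => rfl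
  have hLmono : StrictMono L := by
    apply strictMono_nat_of_lt_succ
    intro j
    rw [hLsucc j]
    have := Nat.right_le_pair (σ (j + 1) - 1) (L j + 1)
    omega
  have hLe : ∀ j, e (L j) = σ j := by
    intro j
    have h1 := hσ1 j
    cases j with
    | zero =>
      show (Nat.unpair (Nat.pair (σ 0 - 1) 0)).1 + 1 = σ 0
      rw [Nat.unpair_pair]
      omega
    | succ j =>
      show (Nat.unpair (Nat.pair (σ (j + 1) - 1) (L j + 1))).1 + 1 = σ (j + 1)
      rw [Nat.unpair_pair]
      simp only
      omega
  refine ⟨fun j => n (k (L j)), hn.comp (hkmono.comp hLmono), ?_⟩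
  have h2 : Tendsto (fun j => ι (r (L j))) atTop (𝓝 (0 : X)) := by
    have hy : Tendsto (fun j => r (L j)) atTop (𝓝 (0 : Y)) := by
      rw [tendsto_iff_forall_eventually_mem]
      intro U hU
      obtain ⟨a, haU⟩ := hWbasis U hU
      filter_upwards [eventually_ge_atTop a] with j hj
      refine haU (hWmono a (L j + 1) ?_ (hrmem (L j)))
      have : j ≤ L j := hLmono.le_apply
      omega
    have hcomp := (hι.tendsto (0 : Y)).comp hy
    simpa [Function.comp_def] using hcomp
  have h3 : Tendsto (fun j => δ (L j)) atTop (𝓝 (0 : X)) := by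
    rw [tendsto_iff_forall_eventually_mem]
    intro U hU
    exact Eventually.of_forall fun j => hspec _ (hδc (L j)) U hU
  have h1 : Tendsto (fun j => x (e (L j))) atTop (𝓝 z) := by
    have hfun : (fun j => x (e (L j))) = fun j => x (σ j) :=
      funext fun j => by rw [hLe j]
    rw [hfun]
    exact hσ2
  have hsum := (h1.add h2).add h3
  rw [add_zero, add_zero] at hsum
  refine hsum.congr ?_
  intro j
  exact (hδeq (L j)).symm
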